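/- Let (B, p⊥, τ) be a static anisotropic (CGL) plasma equilibrium on ℝ³, let p := p⊥ + τ|B|²/2 be the mean pressure, and let f : ℝ² → ℝ be any smooth function. Then div( f(p, τ) B ) = 0 everywhere on ℝ³. (This conservation of magnetic flux reflects the facts that B · grad p = 0 and B · grad τ = 0, i.e. p and τ are constant on magnetic surfaces.) -/

import Mathlib

open Matrix

noncomputable section

abbrev R3 : Type := Fin 3 → ℝ

/-- Partial derivative in the `i`-th coordinate direction. -/
def pd (i : Fin 3) (f : R3 → ℝ) (x : R3) : ℝ := fderiv ℝ f x (Pi.single i 1)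

/-- Gradient of a scalar field on ℝ³. -/
def grad3 (f : R3 → ℝ) (x : R3) : R3 := fun i => pd i f x

/-- Divergence of a vector field on ℝ³. -/
def div3 (B : R3 → R3) (x : R3) : ℝ := ∑ i, pd i (fun y => B y i) x

/-- Curl of a vector field on ℝ³. -/
def curl3 (B : R3 → R3) (x : R3) : R3 :=
  ![pd 1 (fun y => B y 2) x - pd 2 (fun y => B y 1) x,
    pd 2 (fun y => B y 0) x - pd 0 (fun y => B y 2) x,
    pd 0 (fun y => B y 1) x - pd 1 (fun y => B y 0) x]

lemma pd_add (g h : R3 → ℝ) (x : R3) (i : Fin 3) (hg : DifferentiableAt ℝ g x)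
    (hh : DifferentiableAt ℝ h x) :
    pd i (fun y => g y + h y) x = pd i g x + pd i h x := by
  simp [pd, fderiv_fun_add hg hh]

lemma pd_mul (g h : R3 → ℝ) (x : R3) (i : Fin 3) (hg : DifferentiableAt ℝ g x)
    (hh : DifferentiableAt ℝ h x) :
    pd i (fun y => g y * h y) x = pd i g x * h x + g x * pd i h x := by
  simp [pd, fderiv_fun_mul hg hh]; ring

/-- Conservation of magnetic flux for static anisotropic (CGL) equilibria:
`div(f(p, τ) B) = 0` for any smooth `f : ℝ² → ℝ`, where `p = p⊥ + τ|B|²/2`. -/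
theorem cgl_magnetic_flux_conservation
    (B : R3 → R3) (pperp τ : R3 → ℝ)
    (hB : ContDiff ℝ (⊤ : ℕ∞) B) (hpperp : ContDiff ℝ (⊤ : ℕ∞) pperp)
    (hτ : ContDiff ℝ (⊤ : ℕ∞) τ)
    (hmom : ∀ x, (1 - τ x) • crossProduct (curl3 B x) (B x) =
      grad3 pperp x + τ x • grad3 (fun y => (B y ⬝ᵥ B y) / 2) x + (B x ⬝ᵥ grad3 τ x) • B x)
    (hdiv : ∀ x, div3 B x = 0)
    (hstate : ∀ x, B x ⬝ᵥ grad3 τ x = 0)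
    (p : R3 → ℝ) (hp : p = fun x => pperp x + τ x * (B x ⬝ᵥ B x) / 2)
    (f : ℝ × ℝ → ℝ) (hf : ContDiff ℝ (⊤ : ℕ∞) f) :
    ∀ x, div3 (fun y => f (p y, τ y) • B y) x = 0 := by
  -- smoothness
  have hBi : ∀ i, ContDiff ℝ (⊤ : ℕ∞) (fun y => B y i) := fun i => (contDiff_pi.1 hB i)
  have hBB : ContDiff ℝ (⊤ : ℕ∞) (fun y => B y ⬝ᵥ B y) := by
    have : ContDiff ℝ (⊤ : ℕ∞) (fun y => ∑ i, B y i * B y i) :=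
      ContDiff.sum fun i _ => (hBi i).mul (hBi i)
    simpa [dotProduct] using this
  set q : R3 → ℝ := fun y => (B y ⬝ᵥ B y) / 2 with hqdef
  have hq : ContDiff ℝ (⊤ : ℕ∞) q := hBB.div_const 2
  have hpq : p = fun y => pperp y + τ y * q y := by
    rw [hp]; funext y; simp [hqdef]; ring
  have hps : ContDiff ℝ (⊤ : ℕ∞) p := by
    rw [hpq]; exact hpperp.add (hτ.mul hq)
  intro x
  -- differentiability at x
  have dB : ∀ i, DifferentiableAt ℝ (fun y => B y i) x := fun i =>
    ((hBi i).differentiable (by simp)).differentiableAt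
  have dq : DifferentiableAt ℝ q x := (hq.differentiable (by simp)).differentiableAt
  have dτ : DifferentiableAt ℝ τ x := (hτ.differentiable (by simp)).differentiableAt
  have dpp : DifferentiableAt ℝ pperp x := (hpperp.differentiable (by simp)).differentiableAt
  have dp : DifferentiableAt ℝ p x := (hps.differentiable (by simp)).differentiableAt
  have dg : DifferentiableAt ℝ (fun y => f (p y, τ y)) x :=
    ((hf.comp (hps.prodMk hτ)).differentiable (by simp)).differentiableAt
  -- key: B · grad p = 0
  have hm := congrArg (fun v : R3 => v ⬝ᵥ B x) (hmom x)
  simp only [smul_dotProduct, add_dotProduct, smul_eq_mul] at hm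
  have hcross : crossProduct (curl3 B x) (B x) ⬝ᵥ B x = 0 := by
    rw [dotProduct_comm]; exact dot_cross_self _ _
  rw [hcross, mul_zero] at hm
  have hτB : grad3 τ x ⬝ᵥ B x = 0 := by
    rw [dotProduct_comm]; exact hstate x
  have hmom' : grad3 pperp x ⬝ᵥ B x + τ x * (grad3 q x ⬝ᵥ B x) = 0 := by
    have hBτ := hstate x
    rw [hBτ, zero_mul, add_zero] at hm
    linarith [hm]
  have hBgradp : B x ⬝ᵥ grad3 p x = 0 := by
    have hpdp : ∀ i, pd i p x =
        pd i pperp x + (pd i τ x * q x + τ x * pd i q x) := by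
      intro i
      rw [hpq, pd_add pperp (fun y => τ y * q y) x i dpp (dτ.mul dq),
        pd_mul τ q x i dτ dq]
    have e1 : B x ⬝ᵥ grad3 p x =
        (B x ⬝ᵥ grad3 pperp x) + ((B x ⬝ᵥ grad3 τ x) * q x + τ x * (B x ⬝ᵥ grad3 q x)) := by
      simp only [dotProduct, grad3, Fin.sum_univ_three, hpdp]; ring
    rw [e1, hstate x, zero_mul]
    have e2 : B x ⬝ᵥ grad3 pperp x = grad3 pperp x ⬝ᵥ B x := dotProduct_comm _ _
    have e3 : B x ⬝ᵥ grad3 q x = grad3 q x ⬝ᵥ B x := dotProduct_comm _ _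
    rw [e2, e3]; linarith [hmom']
  -- chain rule
  have hchain : ∀ i, pd i (fun y => f (p y, τ y)) x
      = fderiv ℝ f (p x, τ x) (pd i p x, pd i τ x) := by
    intro i
    have hpair : DifferentiableAt ℝ (fun y => (p y, τ y)) x := dp.prodMk dτ
    have dfA : DifferentiableAt ℝ f (p x, τ x) :=
      (hf.differentiable (by simp)).differentiableAt
    have hcomp : fderiv ℝ (fun y => f (p y, τ y)) x
        = (fderiv ℝ f (p x, τ x)).comp (fderiv ℝ (fun y => (p y, τ y)) x) :=
      fderiv_comp x dfA hpair
    rw [pd, hcomp, DifferentiableAt.fderiv_prodMk dp dτ]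
    simp [pd]
  -- sum over directions
  have hsum : ∑ i, B x i * pd i (fun y => f (p y, τ y)) x = 0 := by
    have e : ∑ i, B x i * pd i (fun y => f (p y, τ y)) x
        = fderiv ℝ f (p x, τ x) (B x ⬝ᵥ grad3 p x, B x ⬝ᵥ grad3 τ x) := by
      simp only [hchain]
      rw [show ((B x ⬝ᵥ grad3 p x, B x ⬝ᵥ grad3 τ x) : ℝ × ℝ)
          = ∑ i, B x i • ((pd i p x, pd i τ x) : ℝ × ℝ) by
        ext <;> simp [dotProduct, grad3, Prod.fst_sum, Prod.snd_sum, mul_comm]]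
      rw [map_sum]
      refine Finset.sum_congr rfl fun i _ => ?_
      rw [(fderiv ℝ f (p x, τ x)).map_smul]
      rfl
    rw [e, hBgradp, hstate x]
    exact (fderiv ℝ f (p x, τ x)).map_zero
  -- assemble
  have hcomp2 : div3 (fun y => f (p y, τ y) • B y) x
      = ∑ i, pd i (fun y => f (p y, τ y) * B y i) x := rfl
  rw [hcomp2]
  have e4 : ∀ i : Fin 3, pd i (fun y => f (p y, τ y) * B y i) x
      = pd i (fun y => f (p y, τ y)) x * B x i + f (p x, τ x) * pd i (fun y => B y i) x :=
    fun i => pd_mul _ _ x i dg (dB i)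
  calc ∑ i, pd i (fun y => f (p y, τ y) * B y i) x
      = (∑ i, B x i * pd i (fun y => f (p y, τ y)) x)
        + f (p x, τ x) * ∑ i, pd i (fun y => B y i) x := by
        rw [Finset.sum_congr rfl (fun i _ => e4 i), Finset.sum_add_distrib,
          ← Finset.mul_sum]
        congr 1
        exact Finset.sum_congr rfl fun i _ => mul_comm _ _
    _ = 0 := by rw [hsum, show (∑ i, pd i (fun y => B y i) x) = div3 B x from rfl, hdiv x]; ring
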